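/- Let (V,w) be an edge-weighted graph on a finite vertex set V with n = |V| vertices, let k ≤ n be a positive integer and ε > 0. Set n' = min(k + ⌈k/ε⌉, n), and let W ⊆ V be any set of n' vertices of largest weighted degree, i.e., |W| = n' and wdeg(u) ≥ wdeg(v) for every u ∈ W and v ∈ V \ W. Then there exists S* ⊆ W with |S*| = k such that E(S*) ≥ (1 − ε) · max{E(S) : S ⊆ V, |S| = k}. -/

import Mathlib

open Finset

variable {V : Type*} [Fintype V] [DecidableEq V]

/-- The weighted degree of a vertex: `wdeg v = w(v,v) + Σ_{u ≠ v} w(v,u)`. -/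
noncomputable def wdeg (w : V → V → ℝ) (v : V) : ℝ :=
  w v v + ∑ u ∈ univ.filter (fun u => u ≠ v), w v u

/-- The total weight covered by `S`: self-loop weights of vertices in `S` plus the
weight of every unordered pair of distinct vertices with at least one endpoint in `S`
(each unordered pair is counted twice in the ordered sum, hence the factor `1/2`). -/
noncomputable def covW (w : V → V → ℝ) (S : Finset V) : ℝ :=
  ∑ v ∈ S, w v v +
    (1 / 2) * ∑ p ∈ (univ ×ˢ univ).filter
      (fun p : V × V => p.1 ≠ p.2 ∧ (p.1 ∈ S ∨ p.2 ∈ S)), w p.1 p.2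

noncomputable def Jw (w : V → V → ℝ) (S : Finset V) : ℝ :=
  ∑ a ∈ S, ∑ b ∈ S.erase a, w a b

lemma Jw_nonneg (w : V → V → ℝ) (hnonneg : ∀ u v, 0 ≤ w u v) (S : Finset V) :
    0 ≤ Jw w S :=
  Finset.sum_nonneg fun _ _ => Finset.sum_nonneg fun _ _ => hnonneg _ _

lemma covW_nonneg (w : V → V → ℝ) (hnonneg : ∀ u v, 0 ≤ w u v) (S : Finset V) :
    0 ≤ covW w S := by
  unfold covW
  have h1 : (0:ℝ) ≤ ∑ v ∈ S, w v v := Finset.sum_nonneg fun _ _ => hnonneg _ _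
  have h2 : (0:ℝ) ≤ ∑ p ∈ (univ ×ˢ univ).filter
      (fun p : V × V => p.1 ≠ p.2 ∧ (p.1 ∈ S ∨ p.2 ∈ S)), w p.1 p.2 :=
    Finset.sum_nonneg fun _ _ => hnonneg _ _
  nlinarith

lemma covW_mono (w : V → V → ℝ) (hnonneg : ∀ u v, 0 ≤ w u v) {S T : Finset V}
    (hST : S ⊆ T) : covW w S ≤ covW w T := by
  unfold covW
  have h1 : ∑ v ∈ S, w v v ≤ ∑ v ∈ T, w v v :=
    Finset.sum_le_sum_of_subset_of_nonneg hST fun _ _ _ => hnonneg _ _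
  have h2 : ∑ p ∈ (univ ×ˢ univ).filter
      (fun p : V × V => p.1 ≠ p.2 ∧ (p.1 ∈ S ∨ p.2 ∈ S)), w p.1 p.2
      ≤ ∑ p ∈ (univ ×ˢ univ).filter
      (fun p : V × V => p.1 ≠ p.2 ∧ (p.1 ∈ T ∨ p.2 ∈ T)), w p.1 p.2 := by
    apply Finset.sum_le_sum_of_subset_of_nonneg
    · intro p hp
      simp only [Finset.mem_filter] at hp ⊢
      exact ⟨hp.1, hp.2.1, hp.2.2.imp (fun h => hST h) (fun h => hST h)⟩
    · exact fun _ _ _ => hnonneg _ _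
  linarith

lemma covW_eq (w : V → V → ℝ) (hsymm : ∀ u v, w u v = w v u) (S : Finset V) :
    covW w S = (∑ x ∈ S, wdeg w x) - (1/2) * Jw w S := by
  have key : ∑ p ∈ (univ ×ˢ univ).filter
      (fun p : V × V => p.1 ≠ p.2 ∧ (p.1 ∈ S ∨ p.2 ∈ S)), w p.1 p.2
      = 2 * (∑ x ∈ S, ∑ u ∈ univ.erase x, w x u) - Jw w S := by
    have hsum : ∑ p ∈ (univ ×ˢ univ).filter
        (fun p : V × V => p.1 ≠ p.2 ∧ (p.1 ∈ S ∨ p.2 ∈ S)), w p.1 p.2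
        = ∑ a : V, ∑ b : V,
            (if a ≠ b ∧ (a ∈ S ∨ b ∈ S) then w a b else 0) := by
      rw [Finset.sum_filter, Finset.sum_product]
    have point : ∀ a b : V,
        (if a ≠ b ∧ (a ∈ S ∨ b ∈ S) then w a b else 0)
        = (if a ≠ b ∧ a ∈ S then w a b else 0)
          + (if a ≠ b ∧ b ∈ S then w a b else 0)
          - (if a ≠ b ∧ a ∈ S ∧ b ∈ S then w a b else 0) := by
      intro a b
      by_cases h1 : a ≠ b
      · by_cases h2 : a ∈ S <;> by_cases h3 : b ∈ S <;> simp [h1, h2, h3]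
      · simp [h1]
    have e1 : ∑ a : V, ∑ b : V, (if a ≠ b ∧ a ∈ S then w a b else 0)
        = ∑ x ∈ S, ∑ u ∈ univ.erase x, w x u := by
      have : ∀ a : V, ∑ b : V, (if a ≠ b ∧ a ∈ S then w a b else 0)
          = if a ∈ S then (∑ u ∈ univ.erase a, w a u) else 0 := by
        intro a
        by_cases ha : a ∈ S
        · simp only [ha, and_true, if_pos]
          rw [← Finset.sum_filter]
          congr 1
          ext b; simp [ne_comm, eq_comm]
        · simp [ha]
      rw [Finset.sum_congr rfl fun a _ => this a, Finset.sum_ite_mem,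
        Finset.univ_inter]
    have e2 : ∑ a : V, ∑ b : V, (if a ≠ b ∧ b ∈ S then w a b else 0)
        = ∑ x ∈ S, ∑ u ∈ univ.erase x, w x u := by
      rw [Finset.sum_comm]
      have : ∀ b : V, ∑ a : V, (if a ≠ b ∧ b ∈ S then w a b else 0)
          = if b ∈ S then (∑ u ∈ univ.erase b, w b u) else 0 := by
        intro b
        by_cases hb : b ∈ S
        · simp only [hb, and_true, if_pos]
          rw [← Finset.sum_filter]
          rw [show Finset.filter (fun a => a ≠ b) univ = univ.erase b by
            ext a; simp]
          exact Finset.sum_congr rfl fun a _ => hsymm a b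
        · simp [hb]
      rw [Finset.sum_congr rfl fun b _ => this b, Finset.sum_ite_mem,
        Finset.univ_inter]
    have e3 : ∑ a : V, ∑ b : V, (if a ≠ b ∧ a ∈ S ∧ b ∈ S then w a b else 0)
        = Jw w S := by
      unfold Jw
      have : ∀ a : V, ∑ b : V, (if a ≠ b ∧ a ∈ S ∧ b ∈ S then w a b else 0)
          = if a ∈ S then (∑ b ∈ S.erase a, w a b) else 0 := by
        intro a
        by_cases ha : a ∈ S
        · simp only [ha, true_and, if_pos]
          rw [← Finset.sum_filter]
          congr 1
          ext b; simp [ne_comm, eq_comm, and_comm]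
        · simp [ha]
      rw [Finset.sum_congr rfl fun a _ => this a, Finset.sum_ite_mem,
        Finset.univ_inter]
    rw [hsum]
    calc ∑ a : V, ∑ b : V, (if a ≠ b ∧ (a ∈ S ∨ b ∈ S) then w a b else 0)
        = ∑ a : V, ∑ b : V,
            ((if a ≠ b ∧ a ∈ S then w a b else 0)
            + (if a ≠ b ∧ b ∈ S then w a b else 0)
            - (if a ≠ b ∧ a ∈ S ∧ b ∈ S then w a b else 0)) := by
          exact Finset.sum_congr rfl fun a _ =>
            Finset.sum_congr rfl fun b _ => point a b
      _ = (∑ a : V, ∑ b : V, (if a ≠ b ∧ a ∈ S then w a b else 0))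
          + (∑ a : V, ∑ b : V, (if a ≠ b ∧ b ∈ S then w a b else 0))
          - (∑ a : V, ∑ b : V, (if a ≠ b ∧ a ∈ S ∧ b ∈ S then w a b else 0)) := by
          simp [Finset.sum_add_distrib, Finset.sum_sub_distrib]
      _ = 2 * (∑ x ∈ S, ∑ u ∈ univ.erase x, w x u) - Jw w S := by
          rw [e1, e2, e3]; ring
  unfold covW wdeg
  rw [key]
  have : ∀ x : V, Finset.filter (fun u => u ≠ x) univ = univ.erase x := by
    intro x; ext u; simp
  rw [Finset.sum_add_distrib]
  rw [Finset.sum_congr rfl fun x (_ : x ∈ S) => congrArg (fun s => ∑ u ∈ s, w x u) (this x)]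
  ring

lemma Jw_insert (w : V → V → ℝ) (hsymm : ∀ u v, w u v = w v u) {A : Finset V}
    {u : V} (hu : u ∉ A) :
    Jw w (insert u A) = 2 * (∑ x ∈ A, w u x) + Jw w A := by
  unfold Jw
  rw [Finset.sum_insert hu, Finset.erase_insert hu]
  have : ∀ a ∈ A, ∑ b ∈ (insert u A).erase a, w a b
      = w a u + ∑ b ∈ A.erase a, w a b := by
    intro a ha
    have hau : a ≠ u := fun h => hu (h ▸ ha)
    rw [Finset.erase_insert_of_ne hau.symm, Finset.sum_insert (fun h => hu (Finset.mem_of_mem_erase h))]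
  rw [Finset.sum_congr rfl this, Finset.sum_add_distrib]
  have : ∑ a ∈ A, w a u = ∑ a ∈ A, w u a :=
    Finset.sum_congr rfl fun a _ => hsymm a u
  rw [this]; ring

lemma cross_le_covW (w : V → V → ℝ) (hsymm : ∀ u v, w u v = w v u)
    (hnonneg : ∀ u v, 0 ≤ w u v) {C A : Finset V} (hdisj : Disjoint C A) :
    ∑ u ∈ C, ∑ x ∈ A, w u x ≤ covW w A := by
  rw [covW_eq w hsymm]
  have swap : ∑ u ∈ C, ∑ x ∈ A, w u x = ∑ x ∈ A, ∑ u ∈ C, w x u := by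
    rw [Finset.sum_comm]
    exact Finset.sum_congr rfl fun x _ => Finset.sum_congr rfl fun u _ => hsymm u x
  rw [swap]
  have hx : ∀ x ∈ A, ∑ u ∈ C, w x u + ∑ b ∈ A.erase x, w x b ≤ wdeg w x := by
    intro x hx
    have hCsub : C ∪ A.erase x ⊆ univ.erase x := by
      intro y hy
      rcases Finset.mem_union.mp hy with h | h
      · exact Finset.mem_erase.mpr ⟨fun he => (Finset.disjoint_left.mp hdisj (he ▸ h)) hx, Finset.mem_univ y⟩
      · exact Finset.mem_erase.mpr ⟨(Finset.mem_erase.mp h).1, Finset.mem_univ y⟩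
    have hdisj2 : Disjoint C (A.erase x) := hdisj.mono_right (Finset.erase_subset _ _)
    have : ∑ u ∈ C, w x u + ∑ b ∈ A.erase x, w x b = ∑ u ∈ C ∪ A.erase x, w x u := by
      rw [Finset.sum_union hdisj2]
    rw [this]
    unfold wdeg
    have h2 : ∑ u ∈ C ∪ A.erase x, w x u ≤ ∑ u ∈ univ.erase x, w x u :=
      Finset.sum_le_sum_of_subset_of_nonneg hCsub fun _ _ _ => hnonneg _ _
    have h3 : Finset.filter (fun u => u ≠ x) univ = univ.erase x := by
      ext u; simp
    rw [h3]
    have := hnonneg x x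
    linarith
  have hJA : 0 ≤ Jw w A := Jw_nonneg w hnonneg A
  have hsum : ∑ x ∈ A, ∑ u ∈ C, w x u ≤ ∑ x ∈ A, (wdeg w x - ∑ b ∈ A.erase x, w x b) :=
    Finset.sum_le_sum fun x hxx => by linarith [hx x hxx]
  have : ∑ x ∈ A, (wdeg w x - ∑ b ∈ A.erase x, w x b)
      = (∑ x ∈ A, wdeg w x) - Jw w A := by
    rw [Finset.sum_sub_distrib]; rfl
  rw [this] at hsum
  linarith

lemma swap_step (w : V → V → ℝ) (hsymm : ∀ u v, w u v = w v u)
    (hnonneg : ∀ u v, 0 ≤ w u v) {B : Finset V} {u v : V}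
    (hv : v ∈ B) (hu : u ∉ B) (hdeg : wdeg w v ≤ wdeg w u) :
    covW w B - ∑ x ∈ B.erase v, w u x ≤ covW w (insert u (B.erase v)) := by
  set B' := B.erase v with hB'
  have hvB' : v ∉ B' := Finset.notMem_erase v B
  have huB' : u ∉ B' := fun h => hu (Finset.mem_of_mem_erase h)
  have hB : B = insert v B' := (Finset.insert_erase hv).symm
  rw [covW_eq w hsymm, covW_eq w hsymm, hB]
  rw [Finset.sum_insert hvB', Finset.sum_insert huB',
    Jw_insert w hsymm hvB', Jw_insert w hsymm huB']
  have h1 : 0 ≤ ∑ x ∈ B', w v x := Finset.sum_nonneg fun _ _ => hnonneg _ _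
  linarith

theorem statement_0 (w : V → V → ℝ)
    (hsymm : ∀ u v, w u v = w v u) (hnonneg : ∀ u v, 0 ≤ w u v)
    (k : ℕ) (hk : 0 < k) (hkn : k ≤ Fintype.card V)
    (ε : ℝ) (hε : 0 < ε)
    (W : Finset V)
    (hWcard : W.card = min (k + ⌈(k : ℝ) / ε⌉₊) (Fintype.card V))
    (hWdeg : ∀ u ∈ W, ∀ v, v ∉ W → wdeg w v ≤ wdeg w u) :
    ∃ Sstar : Finset V, Sstar ⊆ W ∧ Sstar.card = k ∧
      ∀ S : Finset V, S.card = k → (1 - ε) * covW w S ≤ covW w Sstar := by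
  -- an optimal k-set
  obtain ⟨S0, -, hS0card⟩ := Finset.exists_subset_card_eq (s := (univ : Finset V)) (n := k)
    (by rwa [Finset.card_univ])
  obtain ⟨Sopt, hSoptmem, hSoptmax⟩ := Finset.exists_max_image
    ((univ : Finset V).powersetCard k) (covW w) ⟨S0, Finset.mem_powersetCard.mpr ⟨Finset.subset_univ _, hS0card⟩⟩
  have hSoptcard : Sopt.card = k := (Finset.mem_powersetCard.mp hSoptmem).2
  set M := covW w Sopt with hMdef
  have hM : ∀ S : Finset V, S.card = k → covW w S ≤ M := fun S hS =>
    hSoptmax S (Finset.mem_powersetCard.mpr ⟨Finset.subset_univ _, hS⟩)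
  have hM0 : 0 ≤ M := covW_nonneg w hnonneg Sopt
  have hk' : (0:ℝ) < (k:ℝ) := by exact_mod_cast hk
  set δ : ℝ := ε / k * M with hδdef
  have hδ0 : 0 ≤ δ := mul_nonneg (le_of_lt (div_pos hε hk')) hM0
  have key : ∀ j : ℕ, ∀ B : Finset V, B.card = k → (B \ W).card ≤ j →
      ∃ B', B' ⊆ W ∧ B'.card = k ∧ covW w B - j * δ ≤ covW w B' := by
    intro j
    induction j with
    | zero =>
      intro B hBcard hB0
      have hBW : B ⊆ W := by
        rw [← Finset.sdiff_eq_empty_iff_subset]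
        exact Finset.card_eq_zero.mp (Nat.le_zero.mp hB0)
      exact ⟨B, hBW, hBcard, by simp⟩
    | succ j ih =>
      intro B hBcard hBle
      by_cases hle : (B \ W).card ≤ j
      · obtain ⟨B', h1, h2, h3⟩ := ih B hBcard hle
        refine ⟨B', h1, h2, ?_⟩
        push_cast
        push_cast at h3
        linarith
      · have hcardj : (B \ W).card = j + 1 := le_antisymm hBle (Nat.not_le.mp hle)
        obtain ⟨v, hv⟩ : (B \ W).Nonempty := Finset.card_pos.mp (by omega)
        have hvB : v ∈ B := (Finset.mem_sdiff.mp hv).1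
        have hvW : v ∉ W := (Finset.mem_sdiff.mp hv).2
        -- W has full size k + ⌈k/ε⌉
        have hWlt : W.card < Fintype.card V := by
          rcases lt_or_eq_of_le (Finset.card_le_card (Finset.subset_univ W)) with h | h
          · rwa [Finset.card_univ] at h
          · exfalso
            have : W = univ := Finset.eq_univ_of_card W (by rwa [Finset.card_univ] at h)
            exact hvW (this ▸ Finset.mem_univ v)
        have hWcard' : W.card = k + ⌈(k : ℝ) / ε⌉₊ := by omega
        have hcpos : 0 < ⌈(k : ℝ) / ε⌉₊ := Nat.ceil_pos.mpr (div_pos hk' hε)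
        have hCcard0 : ⌈(k : ℝ) / ε⌉₊ ≤ (W \ B).card := by
          have := Finset.le_card_sdiff B W
          omega
        set C := W \ B with hCdef
        have hCcard : ⌈(k : ℝ) / ε⌉₊ ≤ C.card := hCcard0
        have hCne : C.Nonempty := Finset.card_pos.mp (by omega)
        have hCpos : (0:ℝ) < C.card := by exact_mod_cast Finset.card_pos.mpr hCne
        have hCB : Disjoint C (B.erase v) :=
          Finset.sdiff_disjoint.mono_right (Finset.erase_subset v B)
        have htot : ∑ u ∈ C, ∑ x ∈ B.erase v, w u x ≤ M :=
          le_trans (cross_le_covW w hsymm hnonneg hCB)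
            (le_trans (covW_mono w hnonneg (Finset.erase_subset v B)) (hM B hBcard))
        obtain ⟨u, huC, huavg⟩ : ∃ u ∈ C, ∑ x ∈ B.erase v, w u x ≤ M / C.card := by
          by_contra h
          push_neg at h
          have hlt : ∑ _u ∈ C, (M / (C.card : ℝ)) < ∑ u ∈ C, ∑ x ∈ B.erase v, w u x :=
            Finset.sum_lt_sum_of_nonempty hCne h
          rw [Finset.sum_const, nsmul_eq_mul, mul_div_cancel₀ _ (ne_of_gt hCpos)] at hlt
          linarith
        have hMC : M / C.card ≤ δ := by
          have h1 : (k:ℝ)/ε ≤ (C.card : ℝ) :=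
            le_trans (Nat.le_ceil _) (by exact_mod_cast hCcard)
          have e : ε/(k:ℝ) * ((k:ℝ)/ε) = 1 := by field_simp
          have h2 : (1:ℝ) ≤ ε/(k:ℝ) * C.card := by
            calc (1:ℝ) = ε/(k:ℝ) * ((k:ℝ)/ε) := e.symm
              _ ≤ ε/(k:ℝ) * C.card :=
                mul_le_mul_of_nonneg_left h1 (le_of_lt (div_pos hε hk'))
          rw [div_le_iff₀ hCpos, hδdef]
          nlinarith
        have huW : u ∈ W := (Finset.mem_sdiff.mp huC).1
        have huB : u ∉ B := (Finset.mem_sdiff.mp huC).2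
        have hdeg : wdeg w v ≤ wdeg w u := hWdeg u huW v hvW
        set B2 := insert u (B.erase v) with hB2def
        have hB2card : B2.card = k := by
          rw [hB2def, Finset.card_insert_of_notMem
            (fun h => huB (Finset.mem_of_mem_erase h)), Finset.card_erase_of_mem hvB]
          omega
        have hB2W : (B2 \ W).card ≤ j := by
          have hEq : B2 \ W = (B \ W).erase v := by
            ext x
            simp only [hB2def, Finset.mem_sdiff, Finset.mem_insert, Finset.mem_erase]
            constructor
            · rintro ⟨hx, hxW⟩
              rcases hx with rfl | ⟨hxv, hxB⟩
              · exact absurd huW hxW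
              · exact ⟨hxv, hxB, hxW⟩
            · rintro ⟨hxv, hxB, hxW⟩
              exact ⟨Or.inr ⟨hxv, hxB⟩, hxW⟩
          rw [hEq, Finset.card_erase_of_mem hv]
          omega
        have hswap : covW w B - δ ≤ covW w B2 := by
          have := swap_step w hsymm hnonneg hvB huB hdeg
          rw [← hB2def] at this
          linarith
        obtain ⟨B', h1, h2, h3⟩ := ih B2 hB2card hB2W
        refine ⟨B', h1, h2, ?_⟩
        push_cast
        push_cast at h3
        linarith
  obtain ⟨Sstar, hsub, hcard, hbound⟩ := key k Sopt hSoptcard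
    (le_trans (Finset.card_le_card Finset.sdiff_subset) (le_of_eq hSoptcard))
  have hkδ : (k:ℝ) * δ = ε * M := by
    rw [hδdef]; field_simp
  have hfin : M - ε * M ≤ covW w Sstar := by
    rw [← hkδ]; exact hbound
  refine ⟨Sstar, hsub, hcard, fun S hS => ?_⟩
  have hSM := hM S hS
  have hS0' := covW_nonneg w hnonneg S
  have hStar0 := covW_nonneg w hnonneg Sstar
  by_cases h1ε : ε ≤ 1
  · nlinarith
  · nlinarith
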